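/- Let p,q,r be states of a 1-VASS, let P be a set of p-q paths with Pareto set P', and let R be a set of q-r paths with Pareto set R'. Then P'·R' := {π·π' : π ∈ P', π' ∈ R'} is a Pareto set for P·R := {π·π' : π ∈ P, π' ∈ R}. -/

import Mathlib

namespace VASSPaper

/-- A 1-VASS (without tests): states `Q`, transition relation `delta`, integer weights `w`. -/
structure VASS (Q : Type) where
  delta : Q → Q → Prop
  w : Q → Q → ℤ

variable {Q : Type}

/-- A path is a nonempty sequence of states joined by transitions. -/
def IsPath (V : VASS Q) : List Q → Prop
  | [] => False
  | [_] => True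
  | a :: b :: l => V.delta a b ∧ IsPath V (b :: l)

/-- The weight of a path: the sum of the weights of its transitions. -/
def pathWeight (V : VASS Q) (π : List Q) : ℤ :=
  (List.zipWith V.w π π.tail).sum

/-- The counter value at position `i` of the run over `π` starting with counter `z`. -/
def counterAt (V : VASS Q) (z : ℕ) (π : List Q) (i : ℕ) : ℤ :=
  (z : ℤ) + pathWeight V (π.take (i + 1))

/-- `π` lifts to a run from counter value `z`: all counter values stay nonnegative. -/
def IsRun (V : VASS Q) (π : List Q) (z : ℕ) : Prop :=
  IsPath V π ∧ ∀ i, i < π.length → 0 ≤ counterAt V z π i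

/-- `π` goes from configuration `c` to configuration `c'`. -/
def RunFromTo (V : VASS Q) (π : List Q) (c c' : Q × ℕ) : Prop :=
  π.head? = some c.1 ∧ π.getLast? = some c'.1 ∧ (c'.2 : ℤ) = (c.2 : ℤ) + pathWeight V π

/-- `c'` is reachable from `c` (in a 1-VASS without tests every run is valid). -/
def Reaches (V : VASS Q) (c c' : Q × ℕ) : Prop :=
  ∃ π, IsRun V π c.2 ∧ RunFromTo V π c c'

/-- A configuration is unbounded if infinitely many configurations are reachable from it. -/
def Unbounded (V : VASS Q) (c : Q × ℕ) : Prop :=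
  {c' | Reaches V c c'}.Infinite

/-- The minimum weight of a (possibly empty) prefix of `π`. -/
def pmin (V : VASS Q) (π : List Q) : ℤ :=
  ((List.range (π.length + 1)).map fun i => pathWeight V (π.take i)).foldr min 0

/-- The maximum weight of a (possibly empty) suffix of `π`. -/
def smax (V : VASS Q) (π : List Q) : ℤ :=
  ((List.range (π.length + 1)).map fun i => pathWeight V (π.drop i)).foldr max 0

/-- A cycle on `q`: a path with at least one transition starting and ending at `q`. -/
def IsCycleOn (V : VASS Q) (π : List Q) (q : Q) : Prop :=
  IsPath V π ∧ 2 ≤ π.length ∧ π.head? = some q ∧ π.getLast? = some q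

/-- A simple cycle on `q`. -/
def IsSimpleCycleOn (V : VASS Q) (π : List Q) (q : Q) : Prop :=
  IsCycleOn V π q ∧ π.dropLast.Nodup

/-- `π` is dominated by `π'` (paths with the same first and last states). -/
def Dominated (V : VASS Q) (π π' : List Q) : Prop :=
  π.head? = π'.head? ∧ π.getLast? = π'.getLast? ∧
    pmin V π ≤ pmin V π' ∧ smax V π ≤ smax V π'

/-- `π` is a path from `p` to `q`. -/
def IsPQPath (V : VASS Q) (p q : Q) (π : List Q) : Prop :=
  IsPath V π ∧ π.head? = some p ∧ π.getLast? = some q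

/-- `P'` is a Pareto set for `P`: every path of `P` is dominated by some path of `P'`. -/
def ParetoFor (V : VASS Q) (P' P : Set (List Q)) : Prop :=
  ∀ π ∈ P, ∃ π' ∈ P', Dominated V π π'

/-- Concatenation of a `p`-`q` path and a `q`-`r` path, identifying the shared state. -/
def pathConcat (π π' : List Q) : List Q := π ++ π'.tail



/-! ### Auxiliary lemmas -/

private lemma foldr_min_le {l : List ℤ} {x : ℤ} (a : ℤ) (h : x ∈ l) : l.foldr min a ≤ x := by
  induction l with
  | nil => simp at h
  | cons b t ih =>
    rcases List.mem_cons.1 h with h | h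
    · subst h; exact min_le_left _ _
    · exact le_trans (min_le_right _ _) (ih h)

private lemma foldr_min_cases (l : List ℤ) (a : ℤ) : l.foldr min a = a ∨ l.foldr min a ∈ l := by
  induction l with
  | nil => left; rfl
  | cons b t ih =>
    rcases le_total b (t.foldr min a) with h | h
    · right; simp [List.foldr, min_eq_left h]
    · rcases ih with h' | h'
      · left; rw [List.foldr, min_eq_right h, h']
      · right; right; rw [List.foldr, min_eq_right h]; exact h'

private lemma le_foldr_max {l : List ℤ} {x : ℤ} (a : ℤ) (h : x ∈ l) : x ≤ l.foldr max a := by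
  induction l with
  | nil => simp at h
  | cons b t ih =>
    rcases List.mem_cons.1 h with h | h
    · subst h; exact le_max_left _ _
    · exact le_trans (ih h) (le_max_right _ _)

private lemma foldr_max_cases (l : List ℤ) (a : ℤ) : l.foldr max a = a ∨ l.foldr max a ∈ l := by
  induction l with
  | nil => left; rfl
  | cons b t ih =>
    rcases le_total (t.foldr max a) b with h | h
    · right; simp [List.foldr, max_eq_left h]
    · rcases ih with h' | h'
      · left; rw [List.foldr, max_eq_right h, h']
      · right; right; rw [List.foldr, max_eq_right h]; exact h'

private lemma pathWeight_nil (V : VASS Q) : pathWeight V ([] : List Q) = 0 := rfl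

private lemma pathWeight_single (V : VASS Q) (a : Q) : pathWeight V [a] = 0 := rfl

private lemma pathWeight_short (V : VASS Q) {l : List Q} (h : l.length ≤ 1) :
    pathWeight V l = 0 := by
  match l, h with
  | [], _ => rfl
  | [a], _ => rfl

private lemma pathWeight_cons_cons (V : VASS Q) (a b : Q) (l : List Q) :
    pathWeight V (a :: b :: l) = V.w a b + pathWeight V (b :: l) := by
  simp [pathWeight]

private lemma pathWeight_append (V : VASS Q) {π ρ : List Q} {x : Q}
    (h1 : π.getLast? = some x) (h2 : ρ.head? = some x) :
    pathWeight V (π ++ ρ.tail) = pathWeight V π + pathWeight V ρ := by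
  induction π with
  | nil => simp at h1
  | cons a t ih =>
    cases t with
    | nil =>
      have hx : a = x := by simpa using h1
      subst hx
      obtain ⟨s, rfl⟩ : ∃ s, ρ = a :: s := by
        cases ρ with
        | nil => simp at h2
        | cons c s => exact ⟨s, by simpa using h2⟩
      simp [pathWeight_single]
    | cons b t' =>
      have h1' : (b :: t').getLast? = some x := by
        rw [← h1]; simp [List.getLast?]
      have := ih h1'
      calc pathWeight V ((a :: b :: t') ++ ρ.tail)
          = V.w a b + pathWeight V ((b :: t') ++ ρ.tail) := pathWeight_cons_cons V a b _
        _ = V.w a b + (pathWeight V (b :: t') + pathWeight V ρ) := by rw [this]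
        _ = pathWeight V (a :: b :: t') + pathWeight V ρ := by
            rw [pathWeight_cons_cons]; ring

private lemma getLast?_take (l : List Q) {j : ℕ} (hj : j < l.length) :
    (l.take (j + 1)).getLast? = l[j]? := by
  rw [List.getLast?_eq_getElem?, List.getElem?_take]
  have hlen : (l.take (j + 1)).length = j + 1 := by
    simp [List.length_take]; omega
  rw [hlen]
  simp

private lemma getLast?_drop (l : List Q) {i : ℕ} (hi : i < l.length) :
    (l.drop i).getLast? = l.getLast? := by
  rw [List.getLast?_eq_getElem?, List.getLast?_eq_getElem?]
  have hlen : (l.drop i).length = l.length - i := List.length_drop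
  rw [hlen, List.getElem?_drop]
  congr 1
  omega

private lemma tail_take (l : List Q) (j : ℕ) : (l.take (j + 1)).tail = l.tail.take j := by
  cases l with
  | nil => simp
  | cons a t => simp [List.take]

private lemma head?_take {l : List Q} (j : ℕ) : (l.take (j + 1)).head? = l.head? := by
  cases l with
  | nil => simp
  | cons a t => simp [List.take]

private lemma pathWeight_split (V : VASS Q) (l : List Q) {j : ℕ} (hj : j < l.length) :
    pathWeight V (l.take (j + 1)) + pathWeight V (l.drop j) = pathWeight V l := by
  have hx : l[j]? = some (l.get ⟨j, hj⟩) := by simp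
  have h1 : (l.take (j + 1)).getLast? = some (l.get ⟨j, hj⟩) := by
    rw [getLast?_take l hj, hx]
  have h2 : (l.drop j).head? = some (l.get ⟨j, hj⟩) := by
    rw [List.head?_drop, hx]
  have := pathWeight_append V h1 h2
  rw [List.tail_drop] at this
  rw [← this, List.take_append_drop]

/-! ### Basic facts about `pmin` and `smax` -/

private lemma pmin_le (V : VASS Q) (π : List Q) {i : ℕ} (hi : i ≤ π.length) :
    pmin V π ≤ pathWeight V (π.take i) := by
  apply foldr_min_le
  exact List.mem_map.2 ⟨i, List.mem_range.2 (Nat.lt_succ_of_le hi), rfl⟩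

private lemma pmin_nonpos (V : VASS Q) (π : List Q) : pmin V π ≤ 0 := by
  have := pmin_le V π (Nat.zero_le π.length)
  simpa [pathWeight] using this

private lemma pmin_exists (V : VASS Q) (π : List Q) :
    ∃ i ≤ π.length, pmin V π = pathWeight V (π.take i) := by
  rcases foldr_min_cases ((List.range (π.length + 1)).map fun i => pathWeight V (π.take i)) 0
    with h | h
  · exact ⟨0, Nat.zero_le _, by rw [pmin, h]; rfl⟩
  · rcases List.mem_map.1 h with ⟨i, hi, he⟩
    exact ⟨i, Nat.lt_succ_iff.1 (List.mem_range.1 hi), he.symm⟩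

private lemma le_smax (V : VASS Q) (π : List Q) {i : ℕ} (hi : i ≤ π.length) :
    pathWeight V (π.drop i) ≤ smax V π := by
  apply le_foldr_max
  exact List.mem_map.2 ⟨i, List.mem_range.2 (Nat.lt_succ_of_le hi), rfl⟩

private lemma smax_nonneg (V : VASS Q) (π : List Q) : 0 ≤ smax V π := by
  have := le_smax V π (le_refl π.length)
  simpa [List.drop_length, pathWeight] using this

private lemma smax_exists (V : VASS Q) (π : List Q) :
    ∃ i ≤ π.length, smax V π = pathWeight V (π.drop i) := by
  rcases foldr_max_cases ((List.range (π.length + 1)).map fun i => pathWeight V (π.drop i)) 0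
    with h | h
  · exact ⟨π.length, le_refl _, by rw [smax, h, List.drop_length]; rfl⟩
  · rcases List.mem_map.1 h with ⟨i, hi, he⟩
    exact ⟨i, Nat.lt_succ_iff.1 (List.mem_range.1 hi), he.symm⟩

/-! ### `pathWeight = pmin + smax` -/

private lemma pathWeight_eq_pmin_add_smax (V : VASS Q) (π : List Q) :
    pathWeight V π = pmin V π + smax V π := by
  apply le_antisymm
  · rcases pmin_exists V π with ⟨i, hi, hpm⟩
    cases i with
    | zero =>
      have h0 : pmin V π = 0 := by simpa [pathWeight] using hpm
      have : pathWeight V (π.drop 0) ≤ smax V π := le_smax V π (Nat.zero_le _)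
      simpa [h0] using this
    | succ j =>
      have hj : j < π.length := hi
      have hsplit := pathWeight_split V π hj
      have hs : pathWeight V (π.drop j) ≤ smax V π := le_smax V π (le_of_lt hj)
      omega
  · rcases smax_exists V π with ⟨i, hi, hsm⟩
    rcases lt_or_eq_of_le hi with hlt | heq
    · have hsplit := pathWeight_split V π hlt
      have hp : pmin V π ≤ pathWeight V (π.take (i + 1)) := pmin_le V π hlt
      omega
    · have h0 : smax V π = 0 := by
        rw [hsm, heq, List.drop_length, pathWeight_nil]
      have hp : pmin V π ≤ pathWeight V (π.take π.length) := pmin_le V π (le_refl _)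
      rw [List.take_length] at hp
      omega

/-! ### `pmin` and `smax` of concatenations -/

section Concat

variable (V : VASS Q) {π ρ : List Q} {x : Q}

private lemma concat_take_low (hρ : ρ.head? = some x) {i : ℕ} (hi : i ≤ π.length) :
    pathWeight V ((pathConcat π ρ).take i) = pathWeight V (π.take i) := by
  rw [pathConcat, List.take_append_of_le_length hi]

private lemma concat_take_high (hπ : π.getLast? = some x) (hρ : ρ.head? = some x) (j : ℕ) :
    pathWeight V ((pathConcat π ρ).take (π.length + j)) =
      pathWeight V π + pathWeight V (ρ.take (j + 1)) := by
  rw [pathConcat, List.take_length_add_append, ← tail_take]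
  exact pathWeight_append V hπ (by rw [head?_take, hρ])

private lemma concat_drop_low (hπ : π.getLast? = some x) (hρ : ρ.head? = some x)
    {i : ℕ} (hi : i < π.length) :
    pathWeight V ((pathConcat π ρ).drop i) = pathWeight V (π.drop i) + pathWeight V ρ := by
  rw [pathConcat, List.drop_append_of_le_length (le_of_lt hi)]
  exact pathWeight_append V (by rw [getLast?_drop π hi, hπ]) hρ

private lemma concat_drop_high (j : ℕ) :
    pathWeight V ((pathConcat π ρ).drop (π.length + j)) = pathWeight V (ρ.drop (j + 1)) := by
  rw [pathConcat, List.drop_length_add_append, List.drop_tail]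

private lemma concat_length (hρ : ρ ≠ []) :
    (pathConcat π ρ).length = π.length + (ρ.length - 1) := by
  rw [pathConcat, List.length_append, List.length_tail]

private lemma pmin_concat_le (hπ : π.getLast? = some x) (hρ : ρ.head? = some x) :
    pmin V (pathConcat π ρ) ≤ min (pmin V π) (pathWeight V π + pmin V ρ) := by
  have hρne : ρ ≠ [] := by intro h; subst h; simp at hρ
  have hρlen : 1 ≤ ρ.length := List.length_pos_iff.2 hρne
  have hlen := concat_length (π := π) hρne
  apply le_min
  · rcases pmin_exists V π with ⟨i, hi, hpm⟩
    have h1 : pmin V (pathConcat π ρ) ≤ pathWeight V ((pathConcat π ρ).take i) :=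
      pmin_le V _ (by omega)
    rw [concat_take_low V hρ hi] at h1
    omega
  · rcases pmin_exists V ρ with ⟨i, hi, hpm⟩
    cases i with
    | zero =>
      have h0 : pmin V ρ = 0 := by simpa [pathWeight] using hpm
      have h1 : pmin V (pathConcat π ρ) ≤ pathWeight V ((pathConcat π ρ).take (π.length + 0)) :=
        pmin_le V _ (by omega)
      rw [concat_take_high V hπ hρ 0] at h1
      have h2 : pathWeight V (ρ.take (0 + 1)) = 0 := by
        apply pathWeight_short
        simpa using (List.length_take_le 1 ρ)
      omega
    | succ j =>
      have hj : j + 1 ≤ ρ.length := hi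
      have h1 : pmin V (pathConcat π ρ) ≤
          pathWeight V ((pathConcat π ρ).take (π.length + j)) := pmin_le V _ (by omega)
      rw [concat_take_high V hπ hρ j] at h1
      omega

private lemma le_pmin_concat (hπ : π.getLast? = some x) (hρ : ρ.head? = some x) :
    min (pmin V π) (pathWeight V π + pmin V ρ) ≤ pmin V (pathConcat π ρ) := by
  have hρne : ρ ≠ [] := by intro h; subst h; simp at hρ
  have hρlen : 1 ≤ ρ.length := List.length_pos_iff.2 hρne
  have hlen := concat_length (π := π) hρne
  rcases pmin_exists V (pathConcat π ρ) with ⟨i, hi, hpm⟩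
  rcases le_or_gt i π.length with h | h
  · rw [concat_take_low V hρ h] at hpm
    have := pmin_le V π h
    have := min_le_left (pmin V π) (pathWeight V π + pmin V ρ)
    omega
  · obtain ⟨j, rfl⟩ : ∃ j, i = π.length + j := ⟨i - π.length, by omega⟩
    rw [concat_take_high V hπ hρ j] at hpm
    have hj : j + 1 ≤ ρ.length := by omega
    have := pmin_le V ρ hj
    have := min_le_right (pmin V π) (pathWeight V π + pmin V ρ)
    omega

private lemma smax_concat_le (hπ : π.getLast? = some x) (hρ : ρ.head? = some x) :
    smax V (pathConcat π ρ) ≤ max (smax V ρ) (pathWeight V ρ + smax V π) := by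
  have hρne : ρ ≠ [] := by intro h; subst h; simp at hρ
  have hρlen : 1 ≤ ρ.length := List.length_pos_iff.2 hρne
  have hlen := concat_length (π := π) hρne
  rcases smax_exists V (pathConcat π ρ) with ⟨i, hi, hsm⟩
  rcases lt_or_ge i π.length with h | h
  · rw [concat_drop_low V hπ hρ h] at hsm
    have := le_smax V π (le_of_lt h)
    have := le_max_right (smax V ρ) (pathWeight V ρ + smax V π)
    omega
  · obtain ⟨j, rfl⟩ : ∃ j, i = π.length + j := ⟨i - π.length, by omega⟩
    rw [concat_drop_high V j] at hsm
    have hj : j + 1 ≤ ρ.length := by omega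
    have := le_smax V ρ hj
    have := le_max_left (smax V ρ) (pathWeight V ρ + smax V π)
    omega

private lemma le_smax_concat (hπ : π.getLast? = some x) (hρ : ρ.head? = some x) :
    max (smax V ρ) (pathWeight V ρ + smax V π) ≤ smax V (pathConcat π ρ) := by
  have hπne : π ≠ [] := by intro h; subst h; simp at hπ
  have hπlen : 1 ≤ π.length := List.length_pos_iff.2 hπne
  have hρne : ρ ≠ [] := by intro h; subst h; simp at hρ
  have hρlen : 1 ≤ ρ.length := List.length_pos_iff.2 hρne
  have hlen := concat_length (π := π) hρne
  -- the suffix of the concatenation starting at position `π.length - 1` has weight `pathWeight ρ`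
  have hkey : pathWeight V ρ ≤ smax V (pathConcat π ρ) := by
    have hlt : π.length - 1 < π.length := by omega
    have h1 : pathWeight V ((pathConcat π ρ).drop (π.length - 1)) =
        pathWeight V (π.drop (π.length - 1)) + pathWeight V ρ :=
      concat_drop_low V hπ hρ hlt
    have h2 : pathWeight V (π.drop (π.length - 1)) = 0 := by
      apply pathWeight_short
      rw [List.length_drop]
      omega
    have h3 := le_smax V (pathConcat π ρ) (i := π.length - 1) (by omega)
    omega
  apply max_le
  · rcases smax_exists V ρ with ⟨i, hi, hsm⟩
    cases i with
    | zero =>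
      simpa [List.drop] using hsm ▸ hkey
    | succ j =>
      have hj : j + 1 ≤ ρ.length := hi
      have h1 := le_smax V (pathConcat π ρ) (i := π.length + j) (by omega)
      rw [concat_drop_high V j] at h1
      omega
  · rcases smax_exists V π with ⟨i, hi, hsm⟩
    rcases lt_or_eq_of_le hi with hlt | heq
    · have h1 := le_smax V (pathConcat π ρ) (i := i) (by omega)
      rw [concat_drop_low V hπ hρ hlt] at h1
      omega
    · have h0 : smax V π = 0 := by
        rw [hsm, heq, List.drop_length, pathWeight_nil]
      omega

end Concat

private lemma head?_concat {π ρ : List Q} (hπ : π ≠ []) :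
    (pathConcat π ρ).head? = π.head? := by
  cases π with
  | nil => exact absurd rfl hπ
  | cons a t => rfl

private lemma getLast?_concat {π ρ : List Q} {q : Q}
    (hπ : π.getLast? = some q) (hρh : ρ.head? = some q) {r : Q}
    (hρl : ρ.getLast? = some r) : (pathConcat π ρ).getLast? = some r := by
  rw [pathConcat, List.getLast?_append]
  cases ρ with
  | nil => simp at hρh
  | cons a t =>
    cases t with
    | nil =>
      have haq : a = q := by simpa using hρh
      have har : a = r := by simpa using hρl
      have hqr : q = r := haq.symm.trans har
      simp [hπ, hqr]
    | cons b t' =>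
      have : (b :: t').getLast? = some r := by
        rw [← hρl]; simp [List.getLast?]
      simp [List.tail, this]

/-- concatenation of Pareto sets is a Pareto set for the concatenation. -/
theorem paretoFor_concat
    {Q : Type} (V : VASS Q) (p q r : Q) (P P' R R' : Set (List Q))
    (hP : ∀ π ∈ P, IsPQPath V p q π) (hR : ∀ π ∈ R, IsPQPath V q r π)
    (hP' : ∀ π ∈ P', IsPQPath V p q π) (hR' : ∀ π ∈ R', IsPQPath V q r π)
    (h1 : ParetoFor V P' P) (h2 : ParetoFor V R' R) :
    ParetoFor V (Set.image2 pathConcat P' R') (Set.image2 pathConcat P R) := by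
  rintro σ ⟨π, hπP, ρ, hρR, rfl⟩
  obtain ⟨π', hπ'P, hd1, hl1, hpm1, hsm1⟩ := h1 π hπP
  obtain ⟨ρ', hρ'R, hd2, hl2, hpm2, hsm2⟩ := h2 ρ hρR
  refine ⟨pathConcat π' ρ', Set.mem_image2_of_mem hπ'P hρ'R, ?_, ?_, ?_, ?_⟩
  · obtain ⟨-, hπh, -⟩ := hP π hπP
    obtain ⟨-, hπ'h, -⟩ := hP' π' hπ'P
    rw [head?_concat (by rintro rfl; simp at hπh),
        head?_concat (by rintro rfl; simp at hπ'h), hπh, hπ'h]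
  · obtain ⟨-, -, hπl⟩ := hP π hπP
    obtain ⟨-, hρh, hρl⟩ := hR ρ hρR
    obtain ⟨-, -, hπ'l⟩ := hP' π' hπ'P
    obtain ⟨-, hρ'h, hρ'l⟩ := hR' ρ' hρ'R
    rw [getLast?_concat hπl hρh hρl, getLast?_concat hπ'l hρ'h hρ'l]
  · obtain ⟨-, -, hπl⟩ := hP π hπP
    obtain ⟨-, hρh, -⟩ := hR ρ hρR
    obtain ⟨-, -, hπ'l⟩ := hP' π' hπ'P
    obtain ⟨-, hρ'h, -⟩ := hR' ρ' hρ'R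
    have e1 := pathWeight_eq_pmin_add_smax V π
    have e2 := pathWeight_eq_pmin_add_smax V π'
    have a1 := pmin_concat_le V hπl hρh
    have a2 := le_pmin_concat V hπ'l hρ'h
    have b1 := min_le_left (pmin V π) (pathWeight V π + pmin V ρ)
    have b2 := min_le_right (pmin V π) (pathWeight V π + pmin V ρ)
    have c1 := le_min_iff.1 (le_refl (min (pmin V π') (pathWeight V π' + pmin V ρ')))
    -- combine
    have hw : pathWeight V π ≤ pathWeight V π' := by omega
    calc pmin V (pathConcat π ρ) ≤ min (pmin V π) (pathWeight V π + pmin V ρ) := a1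
      _ ≤ min (pmin V π') (pathWeight V π' + pmin V ρ') := by
          apply le_min
          · exact le_trans (min_le_left _ _) hpm1
          · exact le_trans (min_le_right _ _) (by omega)
      _ ≤ pmin V (pathConcat π' ρ') := a2
  · obtain ⟨-, -, hπl⟩ := hP π hπP
    obtain ⟨-, hρh, -⟩ := hR ρ hρR
    obtain ⟨-, -, hπ'l⟩ := hP' π' hπ'P
    obtain ⟨-, hρ'h, -⟩ := hR' ρ' hρ'R
    have e1 := pathWeight_eq_pmin_add_smax V ρ
    have e2 := pathWeight_eq_pmin_add_smax V ρ'
    have hw : pathWeight V ρ ≤ pathWeight V ρ' := by omega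
    calc smax V (pathConcat π ρ) ≤ max (smax V ρ) (pathWeight V ρ + smax V π) :=
          smax_concat_le V hπl hρh
      _ ≤ max (smax V ρ') (pathWeight V ρ' + smax V π') := by
          apply max_le
          · exact le_trans hsm2 (le_max_left _ _)
          · exact le_trans (by omega : pathWeight V ρ + smax V π ≤ pathWeight V ρ' + smax V π')
              (le_max_right _ _)
      _ ≤ smax V (pathConcat π' ρ') := le_smax_concat V hπ'l hρ'h

end VASSPaper
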